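/- Let RS = R₁⋯R_p be any reachable state of A(G). For all positions i < j and any variable A occurring in the j-th reminder pair (i.e., A = R_j.Current or R_j.Followup(A) ≥ 1), the variable R_i.Current reaches A: R_i.Current ⇒⁺ A in the reachability relation of G. -/

import Mathlib

/-- The list of variable occurrences (in order) in the right-hand side of a rule. -/
def ruleVars {T N : Type*} (r : ContextFreeRule T N) : List N :=
  r.output.filterMap (fun s => match s with
    | Symbol.nonterminal B => some B
    | _ => none)

/-- The word `w₀w₁⋯w_r` of terminals (in order) in the right-hand side of a rule. -/
def ruleTerms {T N : Type*} (r : ContextFreeRule T N) : List T :=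
  r.output.filterMap (fun s => match s with
    | Symbol.terminal a => some a
    | _ => none)

/-- A reminder pair: a `Current` component in `V ∪ {⊥}` (modelled as `Option`,
with `none` playing the role of `⊥`) and a `Followup` multiset over the variables. -/
abbrev RPair {T : Type*} (g : ContextFreeGrammar T) : Type _ :=
  Option g.NT × Multiset g.NT

/-- A reminder sequence: a finite sequence of reminder pairs. -/
abbrev RSeq {T : Type*} (g : ContextFreeGrammar T) : Type _ := List (RPair g)

/-- The five transition rules of the automaton `A(G)`; a transition reads a word
over the terminals. -/
inductive Step {T : Type*} (g : ContextFreeGrammar T) [DecidableEq g.NT] :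
    RSeq g → List T → RSeq g → Prop where
  /-- (1) `RS·(A,∅) ⟹ RS·(A_j, ⟦A₁,…,A_r⟧ ⊖ ⟦A_j⟧)` reading `w₀w₁⋯w_r`,
  for a production `A → w₀A₁w₁⋯A_r w_r` with `r ≥ 1`. -/
  | ext (RS : RSeq g) (r : ContextFreeRule T g.NT) (hr : r ∈ g.rules)
      (Aj : g.NT) (hAj : Aj ∈ ruleVars r) :
      Step g (RS ++ [(some r.input, 0)]) (ruleTerms r)
        (RS ++ [(some Aj, (ruleVars r : Multiset g.NT).erase Aj)])
  /-- (2) `RS·(A,v) ⟹ RS·(A,v)·(A_j, ⟦A₁,…,A_r⟧ ⊖ ⟦A_j⟧)` when `v ≠ ∅`. -/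
  | extNe (RS : RSeq g) (r : ContextFreeRule T g.NT) (hr : r ∈ g.rules)
      (v : Multiset g.NT) (hv : v ≠ 0) (Aj : g.NT) (hAj : Aj ∈ ruleVars r) :
      Step g (RS ++ [(some r.input, v)]) (ruleTerms r)
        (RS ++ [(some r.input, v), (some Aj, (ruleVars r : Multiset g.NT).erase Aj)])
  /-- (3) `RS·(A,∅) ⟹ RS·(⊥,∅)` reading `w`, for a production `A → w`. -/
  | replE (RS : RSeq g) (r : ContextFreeRule T g.NT) (hr : r ∈ g.rules)
      (hterm : ruleVars r = []) :
      Step g (RS ++ [(some r.input, 0)]) (ruleTerms r) (RS ++ [(none, 0)])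
  /-- (4) `RS·(A, v ⊕ ⟦A′⟧) ⟹ RS·(A′, v)` reading `w`, for a production `A → w`. -/
  | replNe (RS : RSeq g) (r : ContextFreeRule T g.NT) (hr : r ∈ g.rules)
      (hterm : ruleVars r = []) (v : Multiset g.NT) (A' : g.NT) :
      Step g (RS ++ [(some r.input, v + {A'})]) (ruleTerms r) (RS ++ [(some A', v)])
  /-- (5) `RS·(A, v ⊕ ⟦A′⟧)·(⊥,∅) ⟹ RS·(A′, v)` reading `ε`. -/
  | shorten (RS : RSeq g) (A : g.NT) (v : Multiset g.NT) (A' : g.NT) :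
      Step g (RS ++ [(some A, v + {A'}), (none, 0)]) [] (RS ++ [(some A', v)])

/-- The state constraint of `A(G)`: every variable occurs at most twice (as a
`Current` component) in the reminder sequence. -/
def Ok {T : Type*} (g : ContextFreeGrammar T) [DecidableEq g.NT] (RS : RSeq g) : Prop :=
  ∀ A : g.NT, (RS.map Prod.fst).count (some A) ≤ 2

/-- Multi-step runs of `A(G)` through states of the automaton, concatenating the
words read. -/
inductive Steps {T : Type*} (g : ContextFreeGrammar T) [DecidableEq g.NT] :
    RSeq g → List T → RSeq g → Prop where
  | refl (RS : RSeq g) (h : Ok g RS) : Steps g RS [] RS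
  | tail {RS₁ RS₂ RS₃ : RSeq g} {w w' : List T} (h : Steps g RS₁ w RS₂)
      (hstep : Step g RS₂ w' RS₃) (h3 : Ok g RS₃) : Steps g RS₁ (w ++ w') RS₃

/-- The initial state `(S, ∅)` of `A(G)`. -/
def start {T : Type*} (g : ContextFreeGrammar T) : RSeq g := [(some g.initial, 0)]

/-- A reminder sequence is a (reachable) state of `A(G)` if it can be reached from
the initial state `(S, ∅)`. -/
def ReachableState {T : Type*} (g : ContextFreeGrammar T) [DecidableEq g.NT]
    (RS : RSeq g) : Prop :=
  ∃ w : List T, Steps g (start g) w RS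

/-- `A(G)` accepts the word `w`: it can go from the initial state `(S,∅)` to the
final state `(⊥,∅)` reading `w`. -/
def AutAccepts {T : Type*} (g : ContextFreeGrammar T) [DecidableEq g.NT]
    (w : List T) : Prop :=
  Steps g (start g) w [(none, 0)]
/-- The accessibility relation: `A → A′` iff `A′` occurs in the right-hand side of
some production of `A`. -/
def Accessible {T : Type*} (g : ContextFreeGrammar T) (A A' : g.NT) : Prop :=
  ∃ r ∈ g.rules, r.input = A ∧ A' ∈ ruleVars r

/-- The reachability relation `⇒⁺`: transitive closure of accessibility. -/
def Reaches {T : Type*} (g : ContextFreeGrammar T) : g.NT → g.NT → Prop :=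
  Relation.TransGen (Accessible g)

/-- One direction of the edge relation of the reminder graph: for every production
with at least two variable occurrences `A₁, …, A_r`, connect `Aᵢ` with `A_j` (for
distinct variables this is exactly `i ≠ j`), and connect `A′` with `A_j` whenever
`Aᵢ ⇒⁺ A′` and `A′ ≠ A_j`. -/
def RemEdge {T : Type*} (g : ContextFreeGrammar T) (X Y : g.NT) : Prop :=
  (∃ r ∈ g.rules, 2 ≤ (ruleVars r).length ∧ X ∈ ruleVars r ∧ Y ∈ ruleVars r) ∨
  (∃ r ∈ g.rules, 2 ≤ (ruleVars r).length ∧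
    ∃ Ai ∈ ruleVars r, Y ∈ ruleVars r ∧ Reaches g Ai X)

/-- The reminder graph `R(G)` of a context-free grammar, as a simple graph on the
variables. -/
def reminderGraph {T : Type*} (g : ContextFreeGrammar T) : SimpleGraph g.NT where
  Adj X Y := X ≠ Y ∧ (RemEdge g X Y ∨ RemEdge g Y X)
  symm := ⟨fun X Y h => ⟨h.1.symm, h.2.symm⟩⟩
  loopless := ⟨fun X h => h.1 rfl⟩


/-- The invariant: currents of earlier pairs reach all variables of later pairs. -/
def RInv {T : Type*} (g : ContextFreeGrammar T) (RS : RSeq g) : Prop :=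
  ∀ (i j : ℕ) (hi : i < RS.length) (hj : j < RS.length), i < j →
    ∀ A : g.NT, ((RS.get ⟨j, hj⟩).1 = some A ∨ A ∈ (RS.get ⟨j, hj⟩).2) →
      ∀ B : g.NT, (RS.get ⟨i, hi⟩).1 = some B → Reaches g B A

lemma accessible_of_mem_ruleVars {T : Type*} {g : ContextFreeGrammar T}
    {r : ContextFreeRule T g.NT} (hr : r ∈ g.rules) {A : g.NT} (hA : A ∈ ruleVars r) :
    Accessible g r.input A := ⟨r, hr, rfl, hA⟩

lemma gtwo1 {α : Type*} (l : List α) (x y : α) {i : ℕ} (hi : i = l.length) {w} :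
    (l ++ [x, y])[i]'w = x := by
  subst hi; rw [List.getElem_append_right (le_refl _)]; simp

lemma gtwo2 {α : Type*} (l : List α) (x y : α) {i : ℕ} (hi : i = l.length + 1) {w} :
    (l ++ [x, y])[i]'w = y := by
  subst hi; rw [List.getElem_append_right (by omega)]; simp

lemma step_preserves_inv2 {T : Type*} {g : ContextFreeGrammar T} [DecidableEq g.NT]
    {RS₁ RS₂ : RSeq g} {w : List T} (h : Step g RS₁ w RS₂) (hinv : RInv g RS₁) :
    RInv g RS₂ := by
  cases h with
  | ext RS r hr Aj hAj =>
    intro i j hi hj hij A hA B hB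
    simp only [List.get_eq_getElem] at hA hB
    have hj' : j < RS.length + 1 := by simpa using hj
    have hi' : i < RS.length := by omega
    rw [List.getElem_append_left hi'] at hB
    rcases lt_or_eq_of_le (Nat.lt_succ_iff.mp hj') with hjn | hjn
    · rw [List.getElem_append_left hjn] at hA
      exact hinv i j (by simp; omega) (by simp; omega) hij A
        (by simp only [List.get_eq_getElem]; rwa [List.getElem_append_left hjn]) B
        (by simp only [List.get_eq_getElem]; rwa [List.getElem_append_left hi'])
    · rw [List.getElem_concat_length hjn] at hA
      have hAr : A ∈ ruleVars r := by
        rcases hA with h1 | h2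
        · simp at h1; subst h1; exact hAj
        · exact Multiset.mem_of_mem_erase (show A ∈ ((ruleVars r : Multiset g.NT)).erase Aj from h2)
      have hBr : Reaches g B r.input :=
        hinv i RS.length (by simp; omega) (by simp) hi' r.input
          (by simp only [List.get_eq_getElem]
              rw [List.getElem_concat_length rfl]; exact Or.inl rfl) B
          (by simp only [List.get_eq_getElem]; rwa [List.getElem_append_left hi'])
      exact hBr.tail (accessible_of_mem_ruleVars hr hAr)
  | extNe RS r hr v hv Aj hAj =>
    intro i j hi hj hij A hA B hB
    simp only [List.get_eq_getElem] at hA hB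
    have hj' : j < RS.length + 2 := by simpa using hj
    rcases lt_or_eq_of_le (Nat.lt_succ_iff.mp hj') with hjn | hjn
    · rcases lt_or_eq_of_le (Nat.lt_succ_iff.mp hjn) with hjn2 | hjn2
      · -- j < RS.length : both from RS
        have hi' : i < RS.length := by omega
        rw [List.getElem_append_left hjn2] at hA
        rw [List.getElem_append_left hi'] at hB
        exact hinv i j (by simp; omega) (by simp; omega) hij A
          (by simp only [List.get_eq_getElem]; rwa [List.getElem_append_left hjn2]) B
          (by simp only [List.get_eq_getElem]; rwa [List.getElem_append_left hi'])
      · -- j = RS.length : pair (some r.input, v), same in state1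
        have hi' : i < RS.length := by omega
        rw [gtwo1 _ _ _ hjn2] at hA
        rw [List.getElem_append_left hi'] at hB
        exact hinv i j (by simp; omega) (by simp; omega) hij A
          (by simp only [List.get_eq_getElem]
              rw [List.getElem_concat_length hjn2]; exact hA) B
          (by simp only [List.get_eq_getElem]; rwa [List.getElem_append_left hi'])
    · -- j = RS.length + 1 : new pair
      rw [gtwo2 _ _ _ hjn] at hA
      have hAr : A ∈ ruleVars r := by
        rcases hA with h1 | h2
        · simp at h1; subst h1; exact hAj
        · exact Multiset.mem_of_mem_erase (show A ∈ ((ruleVars r : Multiset g.NT)).erase Aj from h2)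
      have hacc := accessible_of_mem_ruleVars hr hAr
      have hi' : i < RS.length + 1 := by omega
      rcases lt_or_eq_of_le (Nat.lt_succ_iff.mp hi') with hin | hin
      · rw [List.getElem_append_left hin] at hB
        have hBr : Reaches g B r.input :=
          hinv i RS.length (by simp; omega) (by simp) hin r.input
            (by simp only [List.get_eq_getElem]
                rw [List.getElem_concat_length rfl]; exact Or.inl rfl) B
            (by simp only [List.get_eq_getElem]; rwa [List.getElem_append_left hin])
        exact hBr.tail hacc
      · rw [gtwo1 _ _ _ hin] at hB
        simp at hB
        subst hB
        exact Relation.TransGen.single hacc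
  | replE RS r hr hterm =>
    intro i j hi hj hij A hA B hB
    simp only [List.get_eq_getElem] at hA hB
    have hj' : j < RS.length + 1 := by simpa using hj
    have hi' : i < RS.length := by omega
    rw [List.getElem_append_left hi'] at hB
    rcases lt_or_eq_of_le (Nat.lt_succ_iff.mp hj') with hjn | hjn
    · rw [List.getElem_append_left hjn] at hA
      exact hinv i j (by simp; omega) (by simp; omega) hij A
        (by simp only [List.get_eq_getElem]; rwa [List.getElem_append_left hjn]) B
        (by simp only [List.get_eq_getElem]; rwa [List.getElem_append_left hi'])
    · rw [List.getElem_concat_length hjn] at hA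
      rcases hA with h1 | h2
      · simp at h1
      · simp at h2
  | replNe RS r hr hterm v A' =>
    intro i j hi hj hij A hA B hB
    simp only [List.get_eq_getElem] at hA hB
    have hj' : j < RS.length + 1 := by simpa using hj
    have hi' : i < RS.length := by omega
    rw [List.getElem_append_left hi'] at hB
    rcases lt_or_eq_of_le (Nat.lt_succ_iff.mp hj') with hjn | hjn
    · rw [List.getElem_append_left hjn] at hA
      exact hinv i j (by simp; omega) (by simp; omega) hij A
        (by simp only [List.get_eq_getElem]; rwa [List.getElem_append_left hjn]) B
        (by simp only [List.get_eq_getElem]; rwa [List.getElem_append_left hi'])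
    · rw [List.getElem_concat_length hjn] at hA
      have hAv : A ∈ v + ({A'} : Multiset g.NT) := by
        rcases hA with h1 | h2
        · simp at h1; subst h1; simp
        · exact Multiset.mem_add.mpr (Or.inl h2)
      exact hinv i RS.length (by simp; omega) (by simp) hi' A
        (by simp only [List.get_eq_getElem]
            rw [List.getElem_concat_length rfl]; exact Or.inr hAv) B
        (by simp only [List.get_eq_getElem]; rwa [List.getElem_append_left hi'])
  | shorten RS A0 v A' =>
    intro i j hi hj hij A hA B hB
    simp only [List.get_eq_getElem] at hA hB
    have hj' : j < RS.length + 1 := by simpa using hj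
    have hi' : i < RS.length := by omega
    rw [List.getElem_append_left hi'] at hB
    have hB1 : (List.get (RS ++ [(some A0, v + {A'}), ((none : Option g.NT), (0 : Multiset g.NT))]) ⟨i, by simp; omega⟩).1 = some B := by
      simp only [List.get_eq_getElem]; rwa [List.getElem_append_left hi']
    rcases lt_or_eq_of_le (Nat.lt_succ_iff.mp hj') with hjn | hjn
    · rw [List.getElem_append_left hjn] at hA
      exact hinv i j (by simp; omega) (by simp; omega) hij A
        (by simp only [List.get_eq_getElem]; rwa [List.getElem_append_left hjn]) B hB1
    · rw [List.getElem_concat_length hjn] at hA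
      have hAv : A ∈ v + ({A'} : Multiset g.NT) := by
        rcases hA with h1 | h2
        · simp at h1; subst h1; simp
        · exact Multiset.mem_add.mpr (Or.inl h2)
      exact hinv i RS.length (by simp; omega) (by simp) hi' A
        (by simp only [List.get_eq_getElem]
            rw [gtwo1 _ _ _ rfl]; exact Or.inr hAv) B hB1

lemma steps_inv22 {T : Type*} {g : ContextFreeGrammar T} [DecidableEq g.NT]
    {RS₁ RS₂ : RSeq g} {w : List T} (h : Steps g RS₁ w RS₂) (h1 : RInv g RS₁) :
    RInv g RS₂ := by
  induction h with
  | refl _ => exact h1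
  | tail h hstep h3 ih => exact step_preserves_inv2 hstep ih

/-- In any reachable state `RS = R₁⋯R_p` of `A(G)`: for positions `i < j` and any
variable `A` occurring in the `j`-th reminder pair (as its `Current` or with
positive multiplicity in its `Followup`), the `Current` variable of the `i`-th pair
reaches `A` via `⇒⁺`. -/
theorem current_reaches_later_variables {T : Type*} (g : ContextFreeGrammar T)
    [DecidableEq g.NT] (RS : RSeq g) (hRS : ReachableState g RS) :
    ∀ (i j : ℕ) (hi : i < RS.length) (hj : j < RS.length), i < j →
      ∀ A : g.NT, ((RS.get ⟨j, hj⟩).1 = some A ∨ A ∈ (RS.get ⟨j, hj⟩).2) →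
        ∀ B : g.NT, (RS.get ⟨i, hi⟩).1 = some B → Reaches g B A := by
  obtain ⟨w, hw⟩ := hRS
  have h0 : RInv g (start g) := by
    intro i j hi hj hij
    simp [start] at hi hj
    omega
  exact steps_inv22 hw h0
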